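/- Let p ≥ 3 be a prime with p ∉ {3, 5}. Then p does not divide the number of points of the reduction of E₁ modulo p, i.e. p ∤ #E₁(𝔽_p); equivalently, a_p(E₁) ≢ 1 mod p. -/

import Mathlib

/-- The reduction modulo `p` of the elliptic curve
`E₁ : y² + xy + y = x³ + x² − 10x − 10` (Cremona label 15A1), i.e. the Weierstrass
curve over `𝔽_p = ZMod p` with coefficients `a₁ = 1`, `a₂ = 1`, `a₃ = 1`, `a₄ = −10`,
`a₆ = −10`. -/
def E₁mod (p : ℕ) : WeierstrassCurve.Affine (ZMod p) :=
  { a₁ := 1, a₂ := 1, a₃ := 1, a₄ := -10, a₆ := -10 }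

open WeierstrassCurve.Affine

section Aux

variable {F : Type*} [Field F] {W : WeierstrassCurve.Affine F}

private lemma some_congr {x x' y y' : F} (hx : x = x') (hy : y = y')
    (h : W.Nonsingular x y) (h' : W.Nonsingular x' y') :
    Point.some _ _ h = Point.some _ _ h' := by subst hx; subst hy; rfl

/-- Injection of points into `Option` of the nonsingular locus. -/
private def ptMap (P : W.Point) : Option {q : F × F // W.Nonsingular q.1 q.2} :=
  match P with
  | .zero => none
  | @Point.some _ _ _ x y h => some ⟨(x, y), h⟩

private lemma ptMap_inj : Function.Injective (ptMap (W := W)) := by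
  intro P Q h
  cases P with
  | zero =>
    cases Q with
    | zero => rfl
    | some h' => simp [ptMap] at h
  | @some x y hx =>
    cases Q with
    | zero => simp [ptMap] at h
    | @some x' y' hx' =>
      simp only [ptMap, Option.some.injEq, Subtype.mk.injEq, Prod.mk.injEq] at h
      exact some_congr h.1 h.2 hx hx'

end Aux

section Counting

private lemma card_point_le (p : ℕ) [Fact p.Prime] :
    Nat.card (E₁mod p).Point ≤ 2 * p + 1 := by
  classical
  haveI : NeZero p := ⟨(Fact.out : p.Prime).pos.ne'⟩
  set W := E₁mod p with hW
  set S : Finset (ZMod p × ZMod p) :=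
    Finset.univ.filter (fun q => W.Nonsingular q.1 q.2) with hS
  have hcard : Nat.card W.Point
      ≤ Nat.card (Option {q : ZMod p × ZMod p // W.Nonsingular q.1 q.2}) :=
    Nat.card_le_card_of_injective _ ptMap_inj
  have hsub : Nat.card {q : ZMod p × ZMod p // W.Nonsingular q.1 q.2} = S.card := by
    rw [Nat.card_eq_fintype_card, Fintype.card_subtype]
  have hopt : Nat.card (Option {q : ZMod p × ZMod p // W.Nonsingular q.1 q.2})
      = S.card + 1 := by
    rw [Nat.card_eq_fintype_card, Fintype.card_option, ← hsub, Nat.card_eq_fintype_card]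
  have hSle : S.card ≤ 2 * p := by
    have hmain := Finset.card_le_mul_card_image_of_maps_to
      (f := Prod.fst) (s := S) (t := Finset.univ)
      (fun a _ => Finset.mem_univ _) 2 ?_
    · simpa [ZMod.card] using hmain
    · intro b _
      by_cases hne : ({a ∈ S | a.1 = b} : Finset (ZMod p × ZMod p)).Nonempty
      · obtain ⟨⟨x₀, y₀⟩, hx₀⟩ := hne
        simp only [Finset.mem_filter, Finset.mem_univ, true_and, hS] at hx₀
        obtain ⟨hns₀, hb₀⟩ := hx₀
        have hsubs : ({a ∈ S | a.1 = b} : Finset (ZMod p × ZMod p)) ⊆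
            {(b, y₀), (b, W.negY b y₀)} := by
          intro q hq
          obtain ⟨x, y⟩ := q
          simp only [Finset.mem_filter, Finset.mem_univ, true_and, hS] at hq
          obtain ⟨hns, hb⟩ := hq
          have hY := W.Y_eq_of_X_eq hns.1 hns₀.1 (hb.trans hb₀.symm)
          simp only [Finset.mem_insert, Finset.mem_singleton, Prod.mk.injEq]
          rcases hY with h | h
          · exact Or.inl ⟨hb, h⟩
          · exact Or.inr ⟨hb, by rw [h, hb₀]⟩
        calc ({a ∈ S | a.1 = b} : Finset (ZMod p × ZMod p)).card
            ≤ ({(b, y₀), (b, W.negY b y₀)} : Finset (ZMod p × ZMod p)).card :=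
              Finset.card_le_card hsubs
          _ ≤ 2 := (Finset.card_insert_le _ _).trans (by simp)
      · rw [Finset.not_nonempty_iff_eq_empty] at hne
        simp [hne]
  omega

end Counting

section Torsion

variable {p : ℕ} [Fact p.Prime]

private lemma five_ne_zero (hp7 : 7 ≤ p) : (5 : ZMod p) ≠ 0 := by
  have h : ((5 : ℕ) : ZMod p) ≠ 0 := by
    rw [Ne, ZMod.natCast_eq_zero_iff]
    intro h
    have := Nat.le_of_dvd (by norm_num) h
    omega
  simpa using h

private lemma hP (hp7 : 7 ≤ p) : (E₁mod p).Nonsingular (-2) 3 := by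
  rw [nonsingular_iff, equation_iff]
  refine ⟨by simp only [E₁mod]; ring, Or.inr fun h => five_ne_zero hp7 ?_⟩
  simp only [E₁mod] at h
  linear_combination h

private lemma hQ (hp7 : 7 ≤ p) : (E₁mod p).Nonsingular 3 (-2) := by
  rw [nonsingular_iff, equation_iff]
  refine ⟨by simp only [E₁mod]; ring, Or.inl fun h => five_ne_zero hp7 ?_⟩
  simp only [E₁mod] at h
  have h5 : (5 : ZMod p) * 5 = 0 := by linear_combination -h
  rcases mul_eq_zero.mp h5 with h' | h' <;> exact h'

private lemma hyne (hp7 : 7 ≤ p) : (3 : ZMod p) ≠ (E₁mod p).negY (-2) 3 := by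
  simp only [negY, E₁mod]
  intro h
  exact five_ne_zero hp7 (by linear_combination h)

private lemma four_dvd_card (hp7 : 7 ≤ p) : 4 ∣ Nat.card (E₁mod p).Point := by
  have hslope : (E₁mod p).slope (-2) (-2) 3 3 = -1 := by
    rw [slope_of_Y_ne rfl (hyne hp7)]
    simp only [negY, E₁mod]
    rw [div_eq_iff (fun h => five_ne_zero hp7 (by linear_combination h))]
    ring
  have hadd : Point.some _ _ (hP hp7) + Point.some _ _ (hP hp7) = Point.some _ _ (hQ hp7) := by
    rw [Point.add_of_Y_ne (hyne hp7)]
    refine some_congr ?_ ?_ _ _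
    · rw [addX, hslope]; simp only [E₁mod]; ring
    · rw [addY, negAddY, addX, negY, hslope]; simp only [E₁mod]; ring
  have hQQ : Point.some _ _ (hQ hp7) + Point.some _ _ (hQ hp7) = 0 := by
    refine Point.add_of_Y_eq rfl ?_
    simp only [negY, E₁mod]; ring
  have h4 : (4 : ℕ) • Point.some _ _ (hP hp7) = 0 := by
    have h24 : (4 : ℕ) • Point.some _ _ (hP hp7)
        = (Point.some _ _ (hP hp7) + Point.some _ _ (hP hp7))
          + (Point.some _ _ (hP hp7) + Point.some _ _ (hP hp7)) := by
      rw [show (4 : ℕ) = 2 * 2 from rfl, mul_nsmul, two_nsmul, two_nsmul]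
    rw [h24, hadd, hQQ]
  have hdvd : addOrderOf (Point.some _ _ (hP hp7)) ∣ 4 := addOrderOf_dvd_of_nsmul_eq_zero h4
  have hne1 : addOrderOf (Point.some _ _ (hP hp7)) ≠ 1 := by
    intro h
    exact Point.some_ne_zero _ (AddMonoid.addOrderOf_eq_one_iff.mp h)
  have hne2 : addOrderOf (Point.some _ _ (hP hp7)) ≠ 2 := by
    intro h
    have h2 : (2 : ℕ) • Point.some _ _ (hP hp7) = 0 := by
        have := addOrderOf_nsmul_eq_zero (Point.some _ _ (hP hp7)); rwa [h] at this
    rw [two_nsmul, hadd] at h2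
    exact Point.some_ne_zero _ h2
  have hord : addOrderOf (Point.some _ _ (hP hp7)) = 4 := by
    obtain ⟨i, hi2, hO⟩ := (Nat.dvd_prime_pow Nat.prime_two).mp
      (show addOrderOf (Point.some _ _ (hP hp7)) ∣ 2 ^ 2 from hdvd)
    interval_cases i
    · exact absurd (by rw [pow_zero] at hO; exact hO) hne1
    · exact absurd (by rw [pow_one] at hO; exact hO) hne2
    · simpa using hO
  exact hord ▸ addOrderOf_dvd_natCard _

end Torsion

/-- For any prime `p ≥ 3` with `p ∉ {3, 5}`, `p` does not divide the number of points
of the reduction of `E₁` modulo `p`; equivalently `a_p(E₁) = p + 1 − #E₁(𝔽_p)` is not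
congruent to `1` modulo `p`. -/
theorem p_not_dvd_card_E₁_mod_p (p : ℕ) (hp : p.Prime) (hp3' : 3 ≤ p) (hp3 : p ≠ 3)
    (hp5 : p ≠ 5) :
    ¬ p ∣ Nat.card (E₁mod p).Point ∧
      ¬ ((p : ℤ) + 1 - Nat.card (E₁mod p).Point ≡ 1 [ZMOD p]) := by
  haveI : Fact p.Prime := ⟨hp⟩
  have h4 : p ≠ 4 := by rintro rfl; norm_num at hp
  have h6 : p ≠ 6 := by rintro rfl; norm_num at hp
  have hp7 : 7 ≤ p := by omega
  have key : ¬ p ∣ Nat.card (E₁mod p).Point := by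
    intro hdvd
    have h4d : 4 ∣ Nat.card (E₁mod p).Point := four_dvd_card hp7
    have hle : Nat.card (E₁mod p).Point ≤ 2 * p + 1 := card_point_le p
    have hcop : Nat.Coprime p 4 := (hp.coprime_iff_not_dvd).mpr (by
      intro h; have := Nat.le_of_dvd (by norm_num) h; omega)
    have hmul : p * 4 ∣ Nat.card (E₁mod p).Point :=
      hcop.mul_dvd_of_dvd_of_dvd hdvd h4d
    have hpos : 0 < Nat.card (E₁mod p).Point := by
      classical
      haveI : NeZero p := ⟨hp.pos.ne'⟩
      haveI : Finite (E₁mod p).Point := Finite.of_injective _ ptMap_inj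
      exact Nat.card_pos
    have := Nat.le_of_dvd hpos hmul
    omega
  refine ⟨key, fun h => key ?_⟩
  have hd : (p : ℤ) ∣ (1 - ((p : ℤ) + 1 - Nat.card (E₁mod p).Point)) := Int.ModEq.dvd h
  have hd' : (p : ℤ) ∣ (Nat.card (E₁mod p).Point : ℤ) := by
    have heq : (1 - ((p : ℤ) + 1 - Nat.card (E₁mod p).Point))
        = (Nat.card (E₁mod p).Point : ℤ) - p := by ring
    rw [heq] at hd
    have := dvd_add hd (dvd_refl (p : ℤ))
    simpa using this
  exact_mod_cast hd'
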